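/- A strict square root s on a pseudo MV-algebra is standard, i.e., s(x) ⊙ s(0) = s(0) ⊙ s(x) for all x. -/
import Mathlib


/-- A pseudo MV-algebra `(M; ⊕, ⁻, ∼, 0, 1)` satisfying axioms (A1)–(A8),
with `x ⊙ y := (y⁻ ⊕ x⁻)∼`. -/
class PseudoMV (M : Type*) where
  oplus : M → M → M
  lneg : M → M
  rneg : M → M
  zero : M
  one : M
  oplus_assoc : ∀ x y z : M, oplus x (oplus y z) = oplus (oplus x y) z
  oplus_zero : ∀ x : M, oplus x zero = x
  zero_oplus : ∀ x : M, oplus zero x = x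
  oplus_one : ∀ x : M, oplus x one = one
  one_oplus : ∀ x : M, oplus one x = one
  lneg_one : lneg one = zero
  rneg_one : rneg one = zero
  a5 : ∀ x y : M, rneg (oplus (lneg x) (lneg y)) = lneg (oplus (rneg x) (rneg y))
  a6₁ : ∀ x y : M,
    oplus x (rneg (oplus (lneg y) (lneg (rneg x)))) =
      oplus y (rneg (oplus (lneg x) (lneg (rneg y))))
  a6₂ : ∀ x y : M,
    oplus x (rneg (oplus (lneg y) (lneg (rneg x)))) =
      oplus (rneg (oplus (lneg (lneg y)) (lneg x))) y
  a6₃ : ∀ x y : M,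
    oplus x (rneg (oplus (lneg y) (lneg (rneg x)))) =
      oplus (rneg (oplus (lneg (lneg x)) (lneg y))) x
  a7 : ∀ x y : M,
    rneg (oplus (lneg (oplus (lneg x) y)) (lneg x)) =
      rneg (oplus (lneg y) (lneg (oplus x (rneg y))))
  a8 : ∀ x : M, rneg (lneg x) = x

namespace PseudoMV

variable {M : Type*} [PseudoMV M]

/-- `x ⊙ y := (y⁻ ⊕ x⁻)∼`. -/
def mul (x y : M) : M := rneg (oplus (lneg y) (lneg x))

/-- `x ∨ y = x ⊕ (x∼ ⊙ y)` (axiom (A6)). -/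
def sup (x y : M) : M := oplus x (mul (rneg x) y)

/-- `x ∧ y = x ⊙ (x⁻ ⊕ y)` (axiom (A7)). -/
def inf (x y : M) : M := mul x (oplus (lneg x) y)

/-- The lattice order of a pseudo MV-algebra. -/
def le (x y : M) : Prop := sup x y = y

/-- `x → y := x⁻ ⊕ y`. -/
def arrow (x y : M) : M := oplus (lneg x) y

/-- `x ⇝ y := y ⊕ x∼`. -/
def squig (x y : M) : M := oplus y (rneg x)

/-- A weak square root: (Sq1) and (Sq2). -/
def IsWeakSqrt (r : M → M) : Prop :=
  (∀ x : M, mul (r x) (r x) = x) ∧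
  (∀ x y : M, le (mul y y) x → le y (r x))

/-- A square root: (Sq1), (Sq2) and (Sq3). -/
def IsSqrt (r : M → M) : Prop :=
  IsWeakSqrt r ∧
  (∀ x : M, r (lneg x) = arrow (r x) (r zero) ∧ r (rneg x) = squig (r x) (r zero))

end PseudoMV

open PseudoMV

namespace PseudoMV

variable {M : Type*} [PseudoMV M]

theorem pmv_lneg_rneg (x : M) : lneg (rneg x) = x := by
  have h := a5 x (one : M)
  rw [lneg_one, rneg_one, oplus_zero, oplus_zero] at h
  rw [← h, a8]

theorem pmv_oplus_rneg_self (x : M) : oplus x (rneg x) = (one : M) := by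
  have h := a6₁ x (one : M)
  rw [lneg_one, zero_oplus, a8, one_oplus] at h
  exact h

theorem pmv_lneg_oplus_self (x : M) : oplus (lneg x) x = (one : M) := by
  have h := a6₂ (one : M) x
  rw [one_oplus, lneg_one, oplus_zero, a8] at h
  exact h.symm

theorem pmv_le_refl (x : M) : le x x := by
  unfold le sup mul
  rw [pmv_lneg_rneg, pmv_lneg_oplus_self, rneg_one, oplus_zero]

theorem pmv_le_lneg_oplus {x y : M} (h : le x y) : oplus (lneg x) y = (one : M) := by
  unfold le sup at h
  rw [← h, oplus_assoc (lneg x) x (mul (rneg x) y), pmv_lneg_oplus_self, one_oplus]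

theorem pmv_le_oplus_rneg {x y : M} (h : le x y) : oplus y (rneg x) = (one : M) := by
  have h3 := a6₃ x y
  unfold le sup mul at h
  rw [h] at h3
  rw [h3, ← oplus_assoc, pmv_oplus_rneg_self, oplus_one]

theorem pmv_mul_lneg_lneg (p : M) : mul (lneg p) (lneg p) = lneg (oplus p p) := by
  unfold mul
  rw [a5, a8]

theorem pmv_mul_rneg_rneg (p : M) : mul (rneg p) (rneg p) = rneg (oplus p p) := by
  unfold mul
  rw [pmv_lneg_rneg]

end PseudoMV

theorem stmt15 {M : Type*} [PseudoMV M] (s : M → M) (hs : IsSqrt s)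
    (hstrict : s zero = lneg (s zero)) :
    ∀ x : M, mul (s x) (s zero) = mul (s zero) (s x) := by
  have hc : rneg (s zero) = s zero := by
    rw [hstrict, a8]; exact hstrict
  intro x
  -- abbreviations
  set u := mul (s zero) (s x) with hu_def
  set v := mul (s x) (s zero) with hv_def
  -- Step A : s (x⁻) = u⁻
  have sA : s (lneg x) = lneg u := by
    rw [(hs.2 x).1, hu_def]
    unfold arrow mul
    rw [pmv_lneg_rneg, ← hstrict]
  -- Step B : s (x∼) = v∼
  have sB : s (rneg x) = rneg v := by
    rw [(hs.2 x).2, hv_def]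
    unfold squig mul
    rw [a5, a8, hc]
  -- Step C : u ⊕ u = x
  have hC := hs.1.1 (lneg x)
  rw [sA, pmv_mul_lneg_lneg] at hC
  have hu : oplus u u = x := by
    have h := congrArg rneg hC
    rw [a8, a8] at h
    exact h
  -- Step D : v ⊕ v = x
  have hD := hs.1.1 (rneg x)
  rw [sB, pmv_mul_rneg_rneg] at hD
  have hv : oplus v v = x := by
    have h := congrArg lneg hD
    rw [pmv_lneg_rneg, pmv_lneg_rneg] at h
    exact h
  -- Step E : v⁻ ≤ s(x⁻) = u⁻
  have hE : mul (lneg v) (lneg v) = lneg x := by rw [pmv_mul_lneg_lneg, hv]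
  have hE2 : le (lneg v) (s (lneg x)) := hs.1.2 _ _ (by rw [hE]; exact pmv_le_refl _)
  rw [sA] at hE2
  -- Step F : u∼ ≤ s(x∼) = v∼
  have hF : mul (rneg u) (rneg u) = rneg x := by rw [pmv_mul_rneg_rneg, hu]
  have hF2 : le (rneg u) (s (rneg x)) := hs.1.2 _ _ (by rw [hF]; exact pmv_le_refl _)
  rw [sB] at hF2
  -- Step G : the two unit equations
  have h1 : oplus (lneg u) v = (one : M) := by
    have := pmv_le_oplus_rneg hE2
    rwa [a8] at this
  have h2 : oplus u (rneg v) = (one : M) := by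
    have := pmv_le_lneg_oplus hF2
    rwa [pmv_lneg_rneg] at this
  -- Step H : conclude via (A7)
  have h7 := a7 u v
  rw [h1, h2, lneg_one, zero_oplus, oplus_zero, a8, a8] at h7
  exact h7.symm
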